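/- arXiv:2509.09957 — 3 statements merged into one kernel-verified Lean document; each statement's English description precedes it below -/
import Mathlib

section
/- The combined operator T = C⁻P(I − C⁺P)^{-1} maps probability vectors to probability vectors, i.e., the total probability mass is conserved when splitting a Markov chain by whether states lie above or below a reorder threshold. -/
/-- Key lemma: if `A` is entrywise nonnegative with column sums `< 1`, and
`A *ᵥ y ≤ y` pointwise, then `y ≥ 0`. -/
lemma key_nonneg {n : ℕ} (A : Matrix (Fin n) (Fin n) ℝ)
    (hA : ∀ i j, 0 ≤ A i j) (hcol : ∀ j, ∑ i, A i j < 1)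
    (y : Fin n → ℝ) (hx : ∀ i, A.mulVec y i ≤ y i) : ∀ i, 0 ≤ y i := by
  by_contra h
  push_neg at h
  set N := Finset.univ.filter (fun i => y i < 0) with hN
  have hmem : ∀ j, j ∈ N ↔ y j < 0 := by intro j; simp [hN]
  have hNne : N.Nonempty := by
    obtain ⟨i, hi⟩ := h; exact ⟨i, (hmem i).2 hi⟩
  have h1 : ∀ j ∈ N, ∑ k ∈ N, A j k * y k ≤ y j := by
    intro j hj
    have h2 : ∑ k ∈ N, A j k * y k ≤ ∑ k, A j k * y k := by
      apply Finset.sum_le_sum_of_subset_of_nonneg (Finset.filter_subset _ _)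
      intro k _ hk
      have hyk : 0 ≤ y k := le_of_not_gt (by simpa using (fun h' => hk ((hmem k).2 h')))
      exact mul_nonneg (hA j k) hyk
    have h3 := hx j
    simp only [Matrix.mulVec, dotProduct] at h3
    linarith
  have h3 : ∑ j ∈ N, ∑ k ∈ N, A j k * y k ≤ ∑ j ∈ N, y j := Finset.sum_le_sum h1
  rw [Finset.sum_comm] at h3
  have h4 : ∑ k ∈ N, y k < ∑ k ∈ N, ∑ j ∈ N, A j k * y k := by
    apply Finset.sum_lt_sum_of_nonempty hNne
    intro k hk
    have hyk : y k < 0 := (hmem k).1 hk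
    have hσ : ∑ j ∈ N, A j k < 1 :=
      lt_of_le_of_lt (Finset.sum_le_sum_of_subset_of_nonneg (Finset.filter_subset _ _)
        (fun j _ _ => hA j k)) (hcol k)
    calc y k = 1 * y k := (one_mul _).symm
      _ < (∑ j ∈ N, A j k) * y k := mul_lt_mul_of_neg_right hσ hyk
      _ = ∑ j ∈ N, A j k * y k := Finset.sum_mul _ _ _
  linarith

/-- The operator `T = C⁻P(I − C⁺P)⁻¹` maps probability vectors to probability
vectors: total probability mass is conserved. -/
theorem stmt_9 (n : ℕ) (P : Matrix (Fin n) (Fin n) ℝ)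
    (hP_nonneg : ∀ i j, 0 ≤ P i j) (hP_col : ∀ j, ∑ i, P i j = 1)
    (c : Fin n → ℝ) (hc : ∀ i, c i = 0 ∨ c i = 1)
    (Cp Cm : Matrix (Fin n) (Fin n) ℝ)
    (hCp : Cp = Matrix.diagonal c) (hCm : Cm = 1 - Cp)
    (hcol : ∀ j, ∑ i, (Cp * P) i j < 1)
    (T : Matrix (Fin n) (Fin n) ℝ) (hT : T = Cm * P * (1 - Cp * P)⁻¹)
    (π : Fin n → ℝ) (hπ_nonneg : ∀ i, 0 ≤ π i) (hπ_sum : ∑ i, π i = 1) :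
    (∀ i, 0 ≤ T.mulVec π i) ∧ ∑ i, T.mulVec π i = 1 := by
  set A := Cp * P with hA
  have hA_entry : ∀ i j, A i j = c i * P i j := by
    intro i j; rw [hA, hCp, Matrix.diagonal_mul]
  have hA_nonneg : ∀ i j, 0 ≤ A i j := by
    intro i j; rw [hA_entry]
    rcases hc i with h | h <;> simp [h, hP_nonneg i j]
  -- invertibility of 1 - A
  have hker : ∀ y : Fin n → ℝ, (1 - A).mulVec y = 0 → y = 0 := by
    intro y hy
    have hy' : A.mulVec y = y := by
      have := hy
      rw [Matrix.sub_mulVec, Matrix.one_mulVec, sub_eq_zero] at this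
      exact this.symm
    have h1 : ∀ i, 0 ≤ y i := key_nonneg A hA_nonneg hcol y (fun i => le_of_eq (congrFun hy' i))
    have h2 : ∀ i, 0 ≤ (-y) i := by
      apply key_nonneg A hA_nonneg hcol
      intro i
      rw [Matrix.mulVec_neg, hy']
    funext i
    have := h1 i; have := h2 i; simp at *; linarith
  have hunit : IsUnit (1 - A) := by
    rw [← Matrix.mulVec_injective_iff_isUnit]
    intro u v huv
    have : (1 - A).mulVec (u - v) = 0 := by
      rw [Matrix.mulVec_sub, huv, sub_self]
    have := hker _ this
    exact sub_eq_zero.mp this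
  have hdet : IsUnit (1 - A).det := (Matrix.isUnit_iff_isUnit_det _).mp hunit
  set y := (1 - A)⁻¹.mulVec π with hy
  have hcancel : (1 - A).mulVec y = π := by
    rw [hy, Matrix.mulVec_mulVec, Matrix.mul_nonsing_inv _ hdet, Matrix.one_mulVec]
  have hc2 : y - A.mulVec y = π := by
    rw [← hcancel, Matrix.sub_mulVec, Matrix.one_mulVec]
  have hyA : ∀ i, y i = π i + A.mulVec y i := by
    intro i
    have := congrFun hc2 i
    simp only [Pi.sub_apply] at this
    linarith
  have hy_nonneg : ∀ i, 0 ≤ y i := by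
    apply key_nonneg A hA_nonneg hcol
    intro i
    linarith [hπ_nonneg i, hyA i]
  have hTπ : T.mulVec π = (Cm * P).mulVec y := by
    rw [hT, ← Matrix.mulVec_mulVec, hy]
  have hCmP : Cm * P = P - A := by
    rw [hCm, hA, Matrix.sub_mul, Matrix.one_mul]
  have hCmP_nonneg : ∀ i j, 0 ≤ (Cm * P) i j := by
    intro i j
    rw [hCmP]
    have : (P - A) i j = (1 - c i) * P i j := by
      simp [Matrix.sub_apply, hA_entry]; ring
    rw [this]
    rcases hc i with h | h <;> simp [h, hP_nonneg i j]
  constructor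
  · intro i
    rw [hTπ]
    simp only [Matrix.mulVec, dotProduct]
    exact Finset.sum_nonneg fun j _ => mul_nonneg (hCmP_nonneg i j) (hy_nonneg j)
  · rw [hTπ, hCmP]
    have hAcol : ∀ j, ∑ i, A i j < 1 := hcol
    have hsub : ∀ i, (P - A).mulVec y i = P.mulVec y i - A.mulVec y i := by
      intro i; rw [Matrix.sub_mulVec]; simp
    have hsumP : ∑ i, P.mulVec y i = ∑ j, y j := by
      simp only [Matrix.mulVec, dotProduct]
      rw [Finset.sum_comm]
      congr 1; funext j
      rw [← Finset.sum_mul, hP_col j, one_mul]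
    have hsumA : ∑ i, A.mulVec y i = ∑ j, y j - 1 := by
      have : ∀ i, A.mulVec y i = y i - π i := by
        intro i; linarith [hyA i]
      simp only [this]
      rw [Finset.sum_sub_distrib, hπ_sum]
    simp only [hsub]
    rw [Finset.sum_sub_distrib, hsumP, hsumA]
    ring
end

section
/- For an irreducible aperiodic column-stochastic matrix P on a finite state space, there exists a unique probability vector π with Pπ = π. -/
section aux

variable {n : ℕ} {P : Matrix (Fin n) (Fin n) ℝ}

lemma stmt11_pow_nonneg (hP_nonneg : ∀ i j, 0 ≤ P i j) :
    ∀ m i j, 0 ≤ (P ^ m) i j := by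
  intro m
  induction m with
  | zero =>
      intro i j
      simp [Matrix.one_apply]
      split <;> norm_num
  | succ k ih =>
      intro i j
      rw [pow_succ, Matrix.mul_apply]
      exact Finset.sum_nonneg fun k' _ => mul_nonneg (ih i k') (hP_nonneg k' j)

lemma stmt11_fix_abs (hP_nonneg : ∀ i j, 0 ≤ P i j) (hP_col : ∀ j, ∑ i, P i j = 1)
    {v : Fin n → ℝ} (hv : P.mulVec v = v) :
    P.mulVec (fun i => |v i|) = fun i => |v i| := by
  have hle : ∀ i, |v i| ≤ ∑ j, P i j * |v j| := by
    intro i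
    have : v i = ∑ j, P i j * v j := by
      conv_lhs => rw [← hv]
      simp [Matrix.mulVec, dotProduct]
    rw [this]
    calc |∑ j, P i j * v j| ≤ ∑ j, |P i j * v j| := Finset.abs_sum_le_sum_abs _ _
      _ = ∑ j, P i j * |v j| := by
          refine Finset.sum_congr rfl fun j _ => ?_
          rw [abs_mul, abs_of_nonneg (hP_nonneg i j)]
  have hsum : ∑ i, ((∑ j, P i j * |v j|) - |v i|) = 0 := by
    rw [Finset.sum_sub_distrib, Finset.sum_comm]
    have : ∑ j, ∑ i, P i j * |v j| = ∑ j, |v j| := by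
      refine Finset.sum_congr rfl fun j _ => ?_
      rw [← Finset.sum_mul, hP_col j, one_mul]
    rw [this, sub_self]
  have hzero := (Finset.sum_eq_zero_iff_of_nonneg
    (fun i _ => sub_nonneg.mpr (hle i))).mp hsum
  funext i
  have := hzero i (Finset.mem_univ i)
  have h2 : ∑ j, P i j * |v j| = |v i| := by linarith [sub_eq_zero.mp this]
  simpa [Matrix.mulVec, dotProduct] using h2

lemma stmt11_pos_of_fix (hP_nonneg : ∀ i j, 0 ≤ P i j)
    (hirr : ∀ i j : Fin n, ∃ m : ℕ, 0 < (P ^ m) i j)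
    {w : Fin n → ℝ} (hw0 : ∀ i, 0 ≤ w i) (hw : P.mulVec w = w) (hne : w ≠ 0) :
    ∀ i, 0 < w i := by
  have hpow : ∀ m : ℕ, (P ^ m).mulVec w = w := by
    intro m
    induction m with
    | zero => simp
    | succ k ih => rw [pow_succ', ← Matrix.mulVec_mulVec, ih, hw]
  obtain ⟨j, hj⟩ : ∃ j, w j ≠ 0 := Function.ne_iff.mp hne
  have hjpos : 0 < w j := lt_of_le_of_ne (hw0 j) (Ne.symm hj)
  intro i
  obtain ⟨m, hm⟩ := hirr i j
  have : w i = ∑ k, (P ^ m) i k * w k := by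
    conv_lhs => rw [← hpow m]
    simp [Matrix.mulVec, dotProduct]
  rw [this]
  have : (P ^ m) i j * w j ≤ ∑ k, (P ^ m) i k * w k :=
    Finset.single_le_sum (f := fun k => (P ^ m) i k * w k)
      (fun k _ => mul_nonneg (stmt11_pow_nonneg hP_nonneg m i k) (hw0 k))
      (Finset.mem_univ j)
  exact lt_of_lt_of_le (mul_pos hm hjpos) this

end aux

/-- An irreducible aperiodic column-stochastic matrix on a finite state space has a
unique stationary probability vector `π` with `Pπ = π`. -/
theorem stmt_11 (n : ℕ) (P : Matrix (Fin n) (Fin n) ℝ)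
    (hP_nonneg : ∀ i j, 0 ≤ P i j) (hP_col : ∀ j, ∑ i, P i j = 1)
    (hirr : ∀ i j : Fin n, ∃ m : ℕ, 0 < (P ^ m) i j)
    (haper : ∃ i : Fin n, ∀ d : ℕ, (∀ m : ℕ, 0 < (P ^ m) i i → d ∣ m) → d = 1) :
    ∃! π : Fin n → ℝ, (∀ i, 0 ≤ π i) ∧ (∑ i, π i = 1) ∧ P.mulVec π = π := by
  obtain ⟨i0, -⟩ := haper
  -- det (P - 1) = 0
  have hdetT : (P.transpose - 1).det = 0 := by
    rw [← Matrix.exists_mulVec_eq_zero_iff]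
    refine ⟨fun _ => 1, ?_, ?_⟩
    · intro h
      have := congrFun h i0
      norm_num at this
    · funext i
      simp [Matrix.sub_mulVec, Matrix.one_mulVec, Matrix.mulVec, dotProduct,
        Matrix.transpose_apply, hP_col i, Matrix.one_apply]
  have hdet : (P - 1).det = 0 := by
    rw [← Matrix.det_transpose, Matrix.transpose_sub, Matrix.transpose_one]
    exact hdetT
  obtain ⟨v, hvne, hvz⟩ := (Matrix.exists_mulVec_eq_zero_iff).mpr hdet
  have hv : P.mulVec v = v := by
    have := hvz
    rwa [Matrix.sub_mulVec, Matrix.one_mulVec, sub_eq_zero] at this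
  -- the nonnegative fixed vector
  set w : Fin n → ℝ := fun i => |v i| with hwdef
  have hwfix : P.mulVec w = w := stmt11_fix_abs hP_nonneg hP_col hv
  have hwne : w ≠ 0 := by
    intro h
    apply hvne
    funext i
    have := congrFun h i
    simpa [hwdef, abs_eq_zero] using this
  have hwpos := stmt11_pos_of_fix hP_nonneg hirr (fun i => abs_nonneg (v i)) hwfix hwne
  have hSpos : 0 < ∑ i, w i :=
    Finset.sum_pos (fun i _ => hwpos i) ⟨i0, Finset.mem_univ i0⟩
  set S := ∑ i, w i
  refine ⟨fun i => w i / S, ⟨fun i => div_nonneg (abs_nonneg _) hSpos.le, ?_, ?_⟩, ?_⟩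
  · rw [← Finset.sum_div, div_self hSpos.ne']
  · have : (fun i => w i / S) = S⁻¹ • w := by
      funext i; simp [div_eq_inv_mul, mul_comm]
    rw [this, Matrix.mulVec_smul, hwfix]
  · -- uniqueness : any two stationary probability vectors are equal
    rintro π ⟨hπ0, hπ1, hπfix⟩
    -- general claim: any two such vectors are equal
    have key : ∀ π' : Fin n → ℝ, (∀ i, 0 ≤ π' i) → (∑ i, π' i = 1) → P.mulVec π' = π' →
        π = π' := by
      intro π' hπ'0 hπ'1 hπ'fix
      by_contra hne
      set d : Fin n → ℝ := fun i => π i - π' i with hddef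
      have hdne : d ≠ 0 := by
        intro h
        apply hne
        funext i
        have := congrFun h i
        simp [hddef] at this
        linarith
      have hdfix : P.mulVec d = d := by
        have : d = π - π' := rfl
        rw [this, Matrix.mulVec_sub, hπfix, hπ'fix]
      have hdsum : ∑ i, d i = 0 := by
        simp [hddef, Finset.sum_sub_distrib, hπ1, hπ'1]
      set a : Fin n → ℝ := fun i => |d i| with hadef
      have hafix : P.mulVec a = a := stmt11_fix_abs hP_nonneg hP_col hdfix
      have hane : a ≠ 0 := by
        intro h
        apply hdne
        funext i
        have := congrFun h i
        simpa [hadef, abs_eq_zero] using this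
      have hapos := stmt11_pos_of_fix hP_nonneg hirr (fun i => abs_nonneg (d i)) hafix hane
      set u : Fin n → ℝ := fun i => a i - d i with hudef
      have hufix : P.mulVec u = u := by
        have : u = a - d := rfl
        rw [this, Matrix.mulVec_sub, hafix, hdfix]
      have hu0 : ∀ i, 0 ≤ u i := fun i => sub_nonneg.mpr (le_abs_self (d i))
      by_cases hucase : u = 0
      · -- then d = a > 0 everywhere, contradicting ∑ d = 0
        have : ∀ i, d i = a i := by
          intro i
          have := congrFun hucase i
          simp [hudef] at this
          linarith
        have hpos : 0 < ∑ i, d i := by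
          refine Finset.sum_pos (fun i _ => ?_) ⟨i0, Finset.mem_univ i0⟩
          rw [this i]; exact hapos i
        linarith [hdsum]
      · have hupos := stmt11_pos_of_fix hP_nonneg hirr hu0 hufix hucase
        -- then d i < |d i| for all i, so d i < 0 for all i
        have hdneg : ∀ i, d i < 0 := by
          intro i
          have h1 : d i < a i := by have := hupos i; simp [hudef] at this; linarith
          by_contra h
          push_neg at h
          rw [hadef] at h1
          simp only [abs_of_nonneg h] at h1
          exact lt_irrefl _ h1
        have : ∑ i, d i < 0 := by
          have : 0 < ∑ i, (-d i) := by
            refine Finset.sum_pos (fun i _ => ?_) ⟨i0, Finset.mem_univ i0⟩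
            linarith [hdneg i]
          rw [Finset.sum_neg_distrib] at this
          linarith
        linarith [hdsum]
    exact (key (fun i => w i / S) (fun i => div_nonneg (abs_nonneg _) hSpos.le)
      (by rw [← Finset.sum_div, div_self hSpos.ne'])
      (by
        have : (fun i => w i / S) = S⁻¹ • w := by
          funext i; simp [div_eq_inv_mul, mul_comm]
        rw [this, Matrix.mulVec_smul, hwfix]))
end

section
/- The closed-form expression for the post-delivery distribution: with α ∈ (0,1), column-stochastic P_f, column-stochastic P_q, integers m ≥ 0, k_p ≥ 1, 0 ≤ k_left < k_p, k_right = k_p − k_left, the sum Σ_{i=1}^{k_p} η_i π^q_i where η_i π^q_i equals (1−α)α^{i−1+k_right} P_q P_f^{m+1}(I−α^{k_p}P_f)^{-1}π for i ≤ k_left and (1−α)α^{i−1−k_left} P_q P_f^{m}(I−α^{k_p}P_f)^{-1}π for i > k_left, simplifies to P_q P_f^m [(1−α^{k_right})I + (1−α^{k_p})α^{k_right} P_f (I−α^{k_p}P_f)^{-1}] π. -/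
private lemma geo1 (α : ℝ) (r : ℕ) : ∀ k : ℕ,
    ∑ i ∈ Finset.Ioc 0 k, (1 - α) * α ^ (i - 1 + r) = α ^ r * (1 - α ^ k) := by
  intro k
  induction k with
  | zero => simp
  | succ k ih =>
      rw [Finset.sum_Ioc_succ_top (Nat.zero_le k), ih]
      have : k + 1 - 1 + r = k + r := by omega
      rw [this]
      ring

private lemma geo2 (α : ℝ) (a : ℕ) : ∀ d : ℕ,
    ∑ i ∈ Finset.Ioc a (a + d), (1 - α) * α ^ (i - 1 - a) = 1 - α ^ d := by
  intro d
  induction d with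
  | zero => simp
  | succ d ih =>
      rw [show a + (d + 1) = (a + d) + 1 from rfl,
        Finset.sum_Ioc_succ_top (Nat.le_add_right a d), ih]
      have : a + d + 1 - 1 - a = d := by omega
      rw [this]
      ring

/-- Closed form for the post-delivery distribution: the sum `Σ_{i=1}^{k_p} η_i π^q_i`
simplifies to
`P_q P_f^m [(1−α^{k_right})I + (1−α^{k_p})α^{k_right} P_f (I−α^{k_p}P_f)⁻¹] π`. -/
theorem stmt_13 (n : ℕ) (Pf Pq : Matrix (Fin n) (Fin n) ℝ)
    (hPf_nonneg : ∀ i j, 0 ≤ Pf i j) (hPf_col : ∀ j, ∑ i, Pf i j = 1)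
    (hPq_nonneg : ∀ i j, 0 ≤ Pq i j) (hPq_col : ∀ j, ∑ i, Pq i j = 1)
    (α : ℝ) (hα0 : 0 < α) (hα1 : α < 1)
    (m kp kleft kright : ℕ) (hkp : 1 ≤ kp) (hkleft : kleft < kp)
    (hkright : kright = kp - kleft)
    (π : Fin n → ℝ) :
    (∑ i ∈ Finset.Icc 1 kp,
      if i ≤ kleft then
        ((1 - α) * α ^ (i - 1 + kright)) •
          ((Pq * Pf ^ (m + 1) * (1 - α ^ kp • Pf)⁻¹).mulVec π)
      else
        ((1 - α) * α ^ (i - 1 - kleft)) •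
          ((Pq * Pf ^ m * (1 - α ^ kp • Pf)⁻¹).mulVec π))
    = ((Pq * Pf ^ m) *
        ((1 - α ^ kright) • (1 : Matrix (Fin n) (Fin n) ℝ) +
         ((1 - α ^ kp) * α ^ kright) • (Pf * (1 - α ^ kp • Pf)⁻¹))).mulVec π := by
  set c : ℝ := α ^ kp with hc
  have hc0 : 0 < c := pow_pos hα0 kp
  have hc1 : c < 1 := pow_lt_one₀ hα0.le hα1 (by omega)
  -- invertibility of 1 - c • Pf
  have hdet : (1 - c • Pf).det ≠ 0 := by
    apply det_ne_zero_of_sum_col_lt_diag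
    intro k
    have hPkk : Pf k k ≤ 1 := by
      have := hPf_col k
      calc Pf k k ≤ ∑ i, Pf i k :=
            Finset.single_le_sum (fun i _ => hPf_nonneg i k) (Finset.mem_univ k)
        _ = 1 := this
    have hsum : ∑ i ∈ Finset.univ.erase k, ‖(1 - c • Pf) i k‖
        = c * (1 - Pf k k) := by
      have : ∀ i ∈ Finset.univ.erase k, ‖(1 - c • Pf) i k‖ = c * Pf i k := by
        intro i hi
        have hik : i ≠ k := (Finset.mem_erase.mp hi).1
        simp only [Matrix.sub_apply, Matrix.one_apply_ne hik, Matrix.smul_apply,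
          smul_eq_mul, zero_sub, norm_neg, Real.norm_eq_abs,
          abs_of_nonneg (mul_nonneg hc0.le (hPf_nonneg i k))]
      rw [Finset.sum_congr rfl this, ← Finset.mul_sum,
        Finset.sum_erase_eq_sub (Finset.mem_univ k), hPf_col k]
    rw [hsum]
    have hdkk : (1 - c • Pf) k k = 1 - c * Pf k k := by
      simp [Matrix.sub_apply, Matrix.one_apply_eq]
    rw [hdkk]
    have h1 : 0 < 1 - c * Pf k k := by nlinarith [hPf_nonneg k k]
    rw [Real.norm_eq_abs, abs_of_pos h1]
    nlinarith [hPf_nonneg k k]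
  set B : Matrix (Fin n) (Fin n) ℝ := (1 - c • Pf)⁻¹ with hB
  have hmul : (1 - c • Pf) * B = 1 :=
    Matrix.mul_nonsing_inv _ (isUnit_iff_ne_zero.mpr hdet)
  have hkey : B = 1 + c • (Pf * B) := by
    have h := hmul
    rw [sub_mul, one_mul, Matrix.smul_mul] at h
    exact sub_eq_iff_eq_add.mp h
  -- arithmetic on indices
  have hkpk : kleft + kright = kp := by omega
  -- split the sum
  have hIcc : Finset.Icc 1 kp = Finset.Ioc 0 kp := Finset.Icc_add_one_left_eq_Ioc 0 kp
  rw [hIcc, ← Finset.sum_Ioc_consecutive _ (Nat.zero_le kleft) hkleft.le]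
  have hs1 : ∑ i ∈ Finset.Ioc 0 kleft,
      (if i ≤ kleft then
        ((1 - α) * α ^ (i - 1 + kright)) •
          ((Pq * Pf ^ (m + 1) * (1 - c • Pf)⁻¹).mulVec π)
      else
        ((1 - α) * α ^ (i - 1 - kleft)) •
          ((Pq * Pf ^ m * (1 - c • Pf)⁻¹).mulVec π))
      = (α ^ kright * (1 - α ^ kleft)) •
          ((Pq * Pf ^ (m + 1) * B).mulVec π) := by
    rw [← geo1 α kright kleft, Finset.sum_smul]
    refine Finset.sum_congr rfl fun i hi => ?_
    have : i ≤ kleft := (Finset.mem_Ioc.mp hi).2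
    rw [if_pos this, hB]
  have hs2 : ∑ i ∈ Finset.Ioc kleft kp,
      (if i ≤ kleft then
        ((1 - α) * α ^ (i - 1 + kright)) •
          ((Pq * Pf ^ (m + 1) * (1 - c • Pf)⁻¹).mulVec π)
      else
        ((1 - α) * α ^ (i - 1 - kleft)) •
          ((Pq * Pf ^ m * (1 - c • Pf)⁻¹).mulVec π))
      = (1 - α ^ kright) • ((Pq * Pf ^ m * B).mulVec π) := by
    have hkp' : kp = kleft + kright := hkpk.symm
    rw [hkp', ← geo2 α kleft kright, Finset.sum_smul]
    refine Finset.sum_congr rfl fun i hi => ?_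
    have : ¬ i ≤ kleft := not_le.mpr (Finset.mem_Ioc.mp hi).1
    rw [if_neg this, hB]
  rw [hs1, hs2]
  -- final algebra
  have hX : Pq * Pf ^ (m + 1) * B = Pq * Pf ^ m * (Pf * B) := by
    rw [pow_succ]; simp only [mul_assoc]
  have hV : Pq * Pf ^ m * B = Pq * Pf ^ m + c • (Pq * Pf ^ m * (Pf * B)) := by
    nth_rewrite 1 [hkey]
    rw [mul_add, mul_one, Matrix.mul_smul, mul_assoc]
  have hR : (Pq * Pf ^ m) *
        ((1 - α ^ kright) • (1 : Matrix (Fin n) (Fin n) ℝ) +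
         ((1 - c) * α ^ kright) • (Pf * B))
      = (1 - α ^ kright) • (Pq * Pf ^ m)
        + ((1 - c) * α ^ kright) • (Pq * Pf ^ m * (Pf * B)) := by
    rw [mul_add, Matrix.mul_smul, Matrix.mul_smul, mul_one, mul_assoc]
  rw [hX, hV, hR]
  have hck : c = α ^ kleft * α ^ kright := by rw [hc, ← hkpk, pow_add]
  simp only [Matrix.add_mulVec, Matrix.smul_mulVec, smul_add, smul_smul]
  match_scalars <;> simp only [hck] <;> ring
end
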